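/- Let L := ∑_{m≥1, m odd} (2/m)·z^m ∈ ℚ⟦z⟧ (the formal power series of ln((1+z)/(1−z))). Then for all integers k ≥ 1 and n ≥ k, the coefficient of z^n in L^k equals S^{(k)}(n) := ∑_{m=k}^{n} binom(n−1, m−1)·(2^m·k!/m!)·s(m,k), and the coefficient of z^n in L^k is 0 for 0 ≤ n < k. -/

import Mathlib

open PowerSeries Finset

/-- Signed Stirling numbers of the first kind: `t(t-1)⋯(t-m+1) = ∑_k s(m,k) t^k`. -/
noncomputable def stirling1 (m k : ℕ) : ℚ := (descPochhammer ℚ m).coeff k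

/-- `S^{(k)}(n) = ∑_{m=k}^n binom(n-1,m-1)·(2^m k!/m!)·s(m,k)`. -/
noncomputable def Sfun (k n : ℕ) : ℚ :=
  ∑ m ∈ Finset.Icc k n,
    ((n - 1).choose (m - 1) : ℚ) * (2 ^ m * (Nat.factorial k) / (Nat.factorial m))
      * stirling1 m k

/-- `L = ∑_{m odd} (2/m) z^m`, the power series of `ln((1+z)/(1-z))`. -/
noncomputable def L : PowerSeries ℚ :=
  PowerSeries.mk fun m => if Odd m then 2 / (m : ℚ) else 0

/-- `ln(1+2z) = -∑ (-2)^m/m z^m`. -/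
noncomputable def M : PowerSeries ℚ :=
  PowerSeries.mk fun m => if m = 0 then 0 else -(-2 : ℚ) ^ m / m

/-- `u = z/(1-z)`. -/
noncomputable def u : PowerSeries ℚ := X * (invOneSubPow ℚ 1).val

lemma stirling1_eq_zero {m k : ℕ} (h : m < k) : stirling1 m k = 0 := by
  apply Polynomial.coeff_eq_zero_of_natDegree_lt
  rwa [descPochhammer_natDegree]

lemma stirling1_rec (m k : ℕ) :
    stirling1 (m + 1) (k + 1) = stirling1 m k - m * stirling1 m (k + 1) := by
  unfold stirling1
  rw [descPochhammer_succ_right, mul_sub, Polynomial.coeff_sub, Polynomial.coeff_mul_X]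
  simp [mul_comm]

lemma coeff_M_zero : PowerSeries.coeff (R := ℚ) 0 M = 0 := by simp [M]

lemma constCoeff_M : PowerSeries.constantCoeff (R := ℚ) M = 0 := by
  rw [← PowerSeries.coeff_zero_eq_constantCoeff_apply]; exact coeff_M_zero

lemma dM_eq : d⁄dX ℚ M = PowerSeries.mk fun n => 2 * (-2 : ℚ) ^ n := by
  ext n
  rw [PowerSeries.coeff_derivative]
  simp only [M, coeff_mk, Nat.succ_ne_zero, if_false]
  have hn : ((n : ℚ) + 1) ≠ 0 := by positivity
  field_simp
  push_cast
  ring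

lemma one_add_two_X_mul_dM : (1 + 2 * X) * (d⁄dX ℚ M) = 2 := by
  rw [dM_eq]
  ext n
  set f : PowerSeries ℚ := PowerSeries.mk fun n => 2 * (-2 : ℚ) ^ n with hf
  have e1 : (1 + 2 * X) * f = f + 2 * (X * f) := by ring
  have e2 : (2 : PowerSeries ℚ) = PowerSeries.C (R := ℚ) 2 := by rw [map_ofNat]
  rw [e1, map_add, e2, PowerSeries.coeff_C_mul]
  cases n with
  | zero =>
    rw [PowerSeries.coeff_zero_X_mul]
    simp [hf, e2]
  | succ n =>
    rw [PowerSeries.coeff_succ_X_mul, PowerSeries.coeff_C]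
    simp only [hf, coeff_mk, Nat.succ_ne_zero, if_false]
    ring

lemma M_pow_rec (k m : ℕ) :
    ((m : ℚ) + 1) * PowerSeries.coeff (R := ℚ) (m + 1) (M ^ (k + 1))
      + 2 * m * PowerSeries.coeff (R := ℚ) m (M ^ (k + 1))
      = 2 * ((k : ℚ) + 1) * PowerSeries.coeff (R := ℚ) m (M ^ k) := by
  have hD : d⁄dX ℚ (M ^ (k + 1)) = (k + 1) • (M ^ k * d⁄dX ℚ M) := by
    rw [Derivation.leibniz_pow]
    simp [smul_smul, Nat.add_sub_cancel, smul_eq_mul, mul_comm]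
  have hmain : (1 + 2 * X) * d⁄dX ℚ (M ^ (k + 1)) = (2 * ((k : ℚ) + 1)) • (M ^ k) := by
    rw [hD, mul_smul_comm]
    have : (1 + 2 * X) * (M ^ k * d⁄dX ℚ M) = M ^ k * ((1 + 2 * X) * d⁄dX ℚ M) := by ring
    rw [this, one_add_two_X_mul_dM]
    have h2 : (M : PowerSeries ℚ) ^ k * 2 = (2 : ℚ) • M ^ k := by
      rw [← map_ofNat (PowerSeries.C (R := ℚ)) 2, mul_comm, PowerSeries.smul_eq_C_mul]
    rw [h2, ← Nat.cast_smul_eq_nsmul ℚ (k + 1), smul_smul]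
    congr 1
    push_cast
    ring
  have := congrArg (PowerSeries.coeff (R := ℚ) m) hmain
  rw [map_smul, smul_eq_mul] at this
  rw [← this]
  set D := d⁄dX ℚ (M ^ (k + 1)) with hDdef
  have e1 : (1 + 2 * X) * D = D + 2 * (X * D) := by ring
  have e2 : (2 : PowerSeries ℚ) = PowerSeries.C (R := ℚ) 2 := by rw [map_ofNat]
  rw [e1, map_add, e2, PowerSeries.coeff_C_mul]
  cases m with
  | zero =>
    rw [PowerSeries.coeff_zero_X_mul, PowerSeries.coeff_derivative]
    push_cast
    ring
  | succ j =>
    rw [PowerSeries.coeff_succ_X_mul, PowerSeries.coeff_derivative, PowerSeries.coeff_derivative]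
    push_cast
    ring

lemma coeff_M_pow (k m : ℕ) :
    PowerSeries.coeff (R := ℚ) m (M ^ k) =
      2 ^ m * (Nat.factorial k) / (Nat.factorial m) * stirling1 m k := by
  induction k generalizing m with
  | zero =>
    rw [pow_zero, PowerSeries.coeff_one]
    cases m with
    | zero => simp [stirling1, descPochhammer_zero]
    | succ j =>
      have hs : stirling1 (j + 1) 0 = 0 := by
        have : stirling1 (j + 1) 0 = (descPochhammer ℚ (j + 1)).eval 0 := by
          rw [stirling1, Polynomial.coeff_zero_eq_eval_zero]
        rw [this, descPochhammer_eval_zero]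
        simp
      simp [hs]
  | succ k ih =>
    induction m with
    | zero =>
      have h0 : PowerSeries.coeff (R := ℚ) 0 (M ^ (k + 1)) = 0 := by
        rw [PowerSeries.coeff_zero_eq_constantCoeff, map_pow, constCoeff_M]
        exact zero_pow (Nat.succ_ne_zero k)
      rw [h0, stirling1]
      rw [descPochhammer_zero]
      simp [Polynomial.coeff_one]
    | succ j ihm =>
      have hrec := M_pow_rec k j
      rw [ihm, ih j] at hrec
      have hj1 : ((j : ℚ) + 1) ≠ 0 := by positivity
      have hcoeff : PowerSeries.coeff (R := ℚ) (j + 1) (M ^ (k + 1))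
          = (2 * ((k : ℚ) + 1) * (2 ^ j * (Nat.factorial k) / (Nat.factorial j) * stirling1 j k)
            - 2 * j * (2 ^ j * (Nat.factorial (k + 1)) / (Nat.factorial j) * stirling1 j (k + 1)))
            / ((j : ℚ) + 1) := by
        field_simp at hrec ⊢
        linarith [hrec]
      rw [hcoeff, stirling1_rec j k]
      have hfj : ((Nat.factorial j : ℚ)) ≠ 0 := Nat.cast_ne_zero.mpr (Nat.factorial_ne_zero j)
      rw [Nat.factorial_succ j, Nat.factorial_succ k]
      push_cast
      field_simp
      ring

lemma u_pow (i : ℕ) : u ^ i = X ^ i * (invOneSubPow ℚ i).val := by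
  rw [u, mul_pow, ← Units.val_pow_eq_pow_val]
  congr 2
  rw [invOneSubPow_eq_inv_one_sub_pow ℚ 1, invOneSubPow_eq_inv_one_sub_pow ℚ i, pow_one]

lemma coeff_u_pow_eq_zero {i n : ℕ} (h : n < i) : PowerSeries.coeff (R := ℚ) n (u ^ i) = 0 := by
  rw [u_pow, PowerSeries.coeff_X_pow_mul', if_neg (by omega)]

lemma coeff_u_pow {i n : ℕ} (hi : 1 ≤ i) (hn : 1 ≤ n) :
    PowerSeries.coeff (R := ℚ) n (u ^ i) = ((n - 1).choose (i - 1) : ℚ) := by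
  rcases lt_or_ge n i with h | h
  · rw [coeff_u_pow_eq_zero h, Nat.choose_eq_zero_of_lt (by omega), Nat.cast_zero]
  · rw [u_pow, PowerSeries.coeff_X_pow_mul', if_pos h,
      invOneSubPow_val_eq_mk_sub_one_add_choose_of_pos ℚ i hi, coeff_mk]
    congr 2
    omega

lemma coeff_aeval_eq_zero {p : Polynomial ℚ} {n : ℕ} (h : ∀ i ≤ n, p.coeff i = 0) :
    PowerSeries.coeff (R := ℚ) n (Polynomial.aeval u p) = 0 := by
  rw [Polynomial.aeval_eq_sum_range, map_sum]
  refine Finset.sum_eq_zero fun i _ => ?_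
  rw [map_smul, smul_eq_mul]
  rcases le_or_gt i n with hi | hi
  · rw [h i hi, zero_mul]
  · rw [coeff_u_pow_eq_zero hi, mul_zero]

lemma coeff_aeval_congr {p q : Polynomial ℚ} {n : ℕ} (h : ∀ i ≤ n, p.coeff i = q.coeff i) :
    PowerSeries.coeff (R := ℚ) n (Polynomial.aeval u p) = PowerSeries.coeff (R := ℚ) n (Polynomial.aeval u q) := by
  have h0 : PowerSeries.coeff (R := ℚ) n (Polynomial.aeval u (p - q)) = 0 :=
    coeff_aeval_eq_zero fun i hi => by
      rw [Polynomial.coeff_sub, h i hi, sub_self]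
  rw [map_sub, map_sub, sub_eq_zero] at h0
  exact h0

lemma coeff_aeval_trunc (f : PowerSeries ℚ) {N n : ℕ} (h : n < N) :
    PowerSeries.coeff (R := ℚ) n (Polynomial.aeval u (trunc N f)) =
      ∑ i ∈ range (n + 1), PowerSeries.coeff (R := ℚ) i f * PowerSeries.coeff (R := ℚ) n (u ^ i) := by
  have hdeg : (trunc N f).natDegree < N := by
    rcases eq_or_ne (trunc N f) 0 with h0 | h0
    · rw [h0, Polynomial.natDegree_zero]; omega
    · exact (Polynomial.natDegree_lt_iff_degree_lt h0).mpr (degree_trunc_lt f N)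
  rw [Polynomial.aeval_eq_sum_range' hdeg, map_sum]
  have step : ∀ i ∈ range N,
      PowerSeries.coeff (R := ℚ) n ((trunc N f).coeff i • u ^ i)
        = PowerSeries.coeff (R := ℚ) i f * PowerSeries.coeff (R := ℚ) n (u ^ i) := by
    intro i hi
    rw [map_smul, smul_eq_mul, coeff_trunc, if_pos (Finset.mem_range.mp hi)]
  rw [Finset.sum_congr rfl step]
  symm
  apply Finset.sum_subset
  · exact Finset.range_subset_range.mpr (by omega)
  · intro i hiN hi
    have : n < i := by
      have := Finset.mem_range.not.mp hi
      omega
    rw [coeff_u_pow_eq_zero this, mul_zero]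

lemma coeff_L_eq (n : ℕ) :
    PowerSeries.coeff (R := ℚ) n L =
      ∑ i ∈ range (n + 1), PowerSeries.coeff (R := ℚ) i M * PowerSeries.coeff (R := ℚ) n (u ^ i) := by
  rcases Nat.eq_zero_or_pos n with rfl | hn
  · simp [L, M]
  have hnQ : (n : ℚ) ≠ 0 := Nat.cast_ne_zero.mpr (by omega)
  apply mul_left_cancel₀ hnQ
  rw [Finset.mul_sum]
  have hterm : ∀ i ∈ range (n + 1),
      (n : ℚ) * (PowerSeries.coeff (R := ℚ) i M * PowerSeries.coeff (R := ℚ) n (u ^ i))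
        = (if i = 0 then 0 else -(-2 : ℚ) ^ i * (n.choose i : ℚ)) := by
    intro i hi
    rcases Nat.eq_zero_or_pos i with rfl | hipos
    · simp [M]
    rw [if_neg (by omega)]
    rw [coeff_u_pow hipos hn]
    have hM : PowerSeries.coeff (R := ℚ) i M = -(-2 : ℚ) ^ i / i := by
      rw [M, coeff_mk, if_neg (by omega)]
    rw [hM]
    have hchoose : (n : ℚ) * ((n - 1).choose (i - 1) : ℚ) = (n.choose i : ℚ) * (i : ℚ) := by
      have := Nat.add_one_mul_choose_eq (n - 1) (i - 1)
      have h1 : (n - 1) + 1 = n := by omega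
      have h2 : (i - 1) + 1 = i := by omega
      rw [h1, h2] at this
      exact_mod_cast congrArg (Nat.cast : ℕ → ℚ) this
    have hiQ : (i : ℚ) ≠ 0 := Nat.cast_ne_zero.mpr (by omega)
    field_simp
    linear_combination (-1 : ℚ) * hchoose
  rw [Finset.sum_congr rfl hterm]
  have hbin : ∑ i ∈ range (n + 1), (-2 : ℚ) ^ i * (n.choose i : ℚ) = (-1 : ℚ) ^ n := by
    have := add_pow (-2 : ℚ) 1 n
    simp only [one_pow, mul_one] at this
    rw [show (-2 : ℚ) + 1 = -1 by norm_num] at this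
    rw [← this]
  have hsplit : ∑ i ∈ range (n + 1), (if i = 0 then 0 else -(-2 : ℚ) ^ i * (n.choose i : ℚ))
      = 1 - (-1 : ℚ) ^ n := by
    have e : ∀ i ∈ range (n + 1), (if i = 0 then 0 else -(-2 : ℚ) ^ i * (n.choose i : ℚ))
        = -((-2 : ℚ) ^ i * (n.choose i : ℚ)) + (if i = 0 then 1 else 0) := by
      intro i _
      rcases eq_or_ne i 0 with rfl | h0
      · simp
      · rw [if_neg h0, if_neg h0]; ring
    rw [Finset.sum_congr rfl e, Finset.sum_add_distrib, Finset.sum_neg_distrib, hbin,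
      Finset.sum_ite_eq' (range (n + 1)) 0 (fun _ => (1 : ℚ)),
      if_pos (Finset.mem_range.mpr (by omega))]
    ring
  rw [hsplit, L, coeff_mk]
  rcases Nat.even_or_odd n with he | ho
  · rw [if_neg (by simpa using (Nat.not_odd_iff_even.mpr he)), he.neg_one_pow]
    ring
  · rw [if_pos ho, ho.neg_one_pow]
    field_simp
    norm_num

lemma key (k : ℕ) : ∀ N n, n < N →
    PowerSeries.coeff (R := ℚ) n (L ^ k) =
      PowerSeries.coeff (R := ℚ) n (Polynomial.aeval u (trunc N (M ^ k))) := by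
  induction k with
  | zero =>
    intro N n h
    obtain ⟨j, rfl⟩ : ∃ j, N = j + 1 := ⟨N - 1, by omega⟩
    rw [pow_zero, pow_zero, trunc_one, map_one (Polynomial.aeval u)]
  | succ k ih =>
    intro N n h
    rw [pow_succ, PowerSeries.coeff_mul]
    have hstep : ∀ p ∈ Finset.HasAntidiagonal.antidiagonal n,
        PowerSeries.coeff (R := ℚ) p.1 (L ^ k) * PowerSeries.coeff (R := ℚ) p.2 L
          = PowerSeries.coeff (R := ℚ) p.1 (Polynomial.aeval u (trunc N (M ^ k)))
            * PowerSeries.coeff (R := ℚ) p.2 (Polynomial.aeval u (trunc N M)) := by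
      intro p hp
      have hadd : p.1 + p.2 = n := Finset.HasAntidiagonal.mem_antidiagonal.mp hp
      rw [ih N p.1 (by omega), coeff_L_eq p.2, ← coeff_aeval_trunc M (show p.2 < N by omega)]
    rw [Finset.sum_congr rfl hstep, ← PowerSeries.coeff_mul, ← map_mul]
    apply coeff_aeval_congr
    intro i hi
    rw [Polynomial.coeff_mul, coeff_trunc, if_pos (by omega), pow_succ, PowerSeries.coeff_mul]
    refine Finset.sum_congr rfl fun p hp => ?_
    have hadd : p.1 + p.2 = i := Finset.HasAntidiagonal.mem_antidiagonal.mp hp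
    rw [coeff_trunc, coeff_trunc, if_pos (by omega), if_pos (by omega)]

theorem coeff_L_pow (k : ℕ) (hk : 1 ≤ k) (n : ℕ) :
    (k ≤ n → PowerSeries.coeff (R := ℚ) n (L ^ k) = Sfun k n)
      ∧ (n < k → PowerSeries.coeff (R := ℚ) n (L ^ k) = 0) := by
  constructor
  · intro hkn
    have h1 : PowerSeries.coeff (R := ℚ) n (L ^ k)
        = ∑ i ∈ range (n + 1),
            (2 ^ i * ((Nat.factorial k : ℚ)) / (Nat.factorial i) * stirling1 i k)
              * PowerSeries.coeff (R := ℚ) n (u ^ i) := by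
      rw [key k (n + 1) n (by omega), coeff_aeval_trunc (M ^ k) (by omega)]
      exact Finset.sum_congr rfl fun i _ => by rw [coeff_M_pow]
    rw [h1]
    have hsub : Finset.Icc k n ⊆ range (n + 1) := fun i hi => by
      rw [Finset.mem_range]
      have := (Finset.mem_Icc.mp hi).2
      omega
    have hvanish : ∀ i ∈ range (n + 1), i ∉ Finset.Icc k n →
        (2 ^ i * ((Nat.factorial k : ℚ)) / (Nat.factorial i) * stirling1 i k)
          * PowerSeries.coeff (R := ℚ) n (u ^ i) = 0 := by
      intro i hi hni
      have hik : i < k := by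
        rw [Finset.mem_range] at hi
        rw [Finset.mem_Icc] at hni
        omega
      rw [stirling1_eq_zero hik]
      ring
    rw [← Finset.sum_subset hsub hvanish, Sfun]
    refine Finset.sum_congr rfl fun i hi => ?_
    have hik := Finset.mem_Icc.mp hi
    rw [coeff_u_pow (by omega) (by omega)]
    ring
  · intro hnk
    have hdvd : (X : PowerSeries ℚ) ^ k ∣ L ^ k := by
      apply pow_dvd_pow_of_dvd
      rw [PowerSeries.X_dvd_iff]
      simp [L]
    exact (PowerSeries.X_pow_dvd_iff.mp hdvd) n hnk
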